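/- Let G be the F-points of a reductive algebraic group over F, let P = MN be a parabolic subgroup of G with Levi M and unipotent radical N, and let (π,V) be a smooth A[G]-module that is finitely generated as an A[G]-module. Then the N-coinvariants V_N, with its natural M-action, is finitely generated as an A[M]-module. -/

import Mathlib

set_option linter.unusedVariables false
set_option linter.unnecessarySimpa false
set_option maxHeartbeats 1000000
set_option synthInstance.maxHeartbeats 2000000

noncomputable section
open scoped TensorProduct Classical

namespace Doubling

variable (A : Type) [CommRing A]

private theorem algMemAux (a : A) : ((algebraMap A (LaurentSeries A)) a).support.Finite := by
  have h : (algebraMap A (LaurentSeries A)) a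
      = HahnSeries.ofPowerSeries ℤ A ((algebraMap A (PowerSeries A)) a) := rfl
  rw [h, PowerSeries.algebraMap_apply]
  simp only [Algebra.algebraMap_self, RingHom.id_apply]
  rw [HahnSeries.ofPowerSeries_C]
  apply Set.Finite.subset (Set.finite_singleton (0:ℤ))
  rw [HahnSeries.C_apply]
  exact HahnSeries.support_single_subset

/-- The Laurent polynomial ring `A[X,X⁻¹]`, realized as the subalgebra of
finitely supported elements of the Laurent series ring `A[[X]][X⁻¹] = LaurentSeries A`. -/
def LPol : Subalgebra A (LaurentSeries A) where
  carrier := {x | x.support.Finite}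
  mul_mem' {x y} hx hy :=
    Set.Finite.subset (hx.add hy) HahnSeries.support_mul_subset
  add_mem' {x y} hx hy :=
    Set.Finite.subset (hx.union hy) (HahnSeries.support_add_subset x y)
  algebraMap_mem' a := algMemAux A a

/-- Membership in the multiplicative set `S ⊆ A[X,X⁻¹]` of Laurent polynomials
whose leading and trailing coefficients are units of `A`. -/
def memS (x : LaurentSeries A) : Prop :=
  x.support.Finite ∧ ∃ n m : ℤ, IsUnit (x.coeff n) ∧ IsUnit (x.coeff m) ∧
    ∀ k : ℤ, (k < n ∨ m < k) → x.coeff k = 0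

/-- Membership in the localization `S⁻¹A[X,X⁻¹]`, regarded inside `A[[X]][X⁻¹]`
(each element of `S` is invertible in `A[[X]][X⁻¹]`, so the localization embeds). -/
def memSinv (x : LaurentSeries A) : Prop :=
  ∃ q : LaurentSeries A, memS A q ∧ (q * x).support.Finite

/-- The involution `X ↦ X⁻¹` of `A[X,X⁻¹]` (extended by `0` to series with
infinite support). -/
def linv (x : LaurentSeries A) : LaurentSeries A :=
  if hx : x.support.Finite then ∑ k ∈ hx.toFinset, HahnSeries.single (-k) (x.coeff k) else 0

variable {A}
variable {G : Type} [Group G] [TopologicalSpace G]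
variable {V : Type} [AddCommGroup V] [Module A V]

/-- The smooth vectors of a representation: vectors with open stabilizer subgroup. -/
def smoothVectors (ρ : Representation A G V) : Submodule A V where
  carrier := {v | ∃ K : Subgroup G, IsOpen (K : Set G) ∧ ∀ k ∈ K, ρ k v = v}
  zero_mem' := ⟨⊤, by simpa using isOpen_univ, fun k _ => map_zero _⟩
  add_mem' := by
    rintro v w ⟨K₁, hK₁, hv⟩ ⟨K₂, hK₂, hw⟩
    exact ⟨K₁ ⊓ K₂, by simpa [Subgroup.coe_inf] using hK₁.inter hK₂,
      fun k hk => by rw [map_add, hv k hk.1, hw k hk.2]⟩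
  smul_mem' := by
    rintro c v ⟨K, hK, hv⟩
    exact ⟨K, hK, fun k hk => by rw [map_smul, hv k hk]⟩

/-- A representation is smooth if every vector is smooth. -/
def IsSmoothRep (ρ : Representation A G V) : Prop := ∀ v : V, v ∈ smoothVectors ρ

/-- The `K`-fixed vectors of a representation. -/
def fixedPts (ρ : Representation A G V) (K : Subgroup G) : Submodule A V where
  carrier := {v | ∀ k ∈ K, ρ k v = v}
  zero_mem' := fun k _ => map_zero _
  add_mem' := fun hv hw k hk => by rw [map_add, hv k hk, hw k hk]
  smul_mem' := fun c v hv k hk => by rw [map_smul, hv k hk]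

/-- Admissibility: for every compact open subgroup `K` the module of `K`-fixed
vectors is finitely generated over `A`. -/
def IsAdmissibleRep (ρ : Representation A G V) : Prop :=
  ∀ K : Subgroup G, IsOpen (K : Set G) → IsCompact (K : Set G) →
    Module.Finite A (fixedPts ρ K)

/-- `G`-finiteness: `V` is finitely generated as an `A[G]`-module. -/
def IsGFinite (ρ : Representation A G V) : Prop :=
  ∃ s : Finset V, Submodule.span A {w | ∃ g : G, ∃ v ∈ s, w = ρ g v} = ⊤

/-- The contragredient `Ṽ`: smooth vectors of the dual representation. -/
def contragredient (ρ : Representation A G V) : Submodule A (Module.Dual A V) :=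
  smoothVectors ρ.dual

/-- The matrix coefficient `g ↦ λ(π(g)v)`. -/
def matCoeffFn (ρ : Representation A G V) (v : V) (l : Module.Dual A V) : G → A :=
  fun g => l (ρ g v)

/-- The module `M(π)` of matrix coefficients of a representation. -/
def MatCoef (ρ : Representation A G V) : Submodule A (G → A) :=
  Submodule.span A {φ | ∃ v : V, ∃ l ∈ contragredient ρ, φ = matCoeffFn ρ v l}

/-- The action of `G × G` on functions on `G`: `((g₁,g₂)·φ)(g) = φ(g₂⁻¹ g g₁)`. -/
def doubleAct : Representation A (G × G) (G → A) where
  toFun p :=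
    { toFun := fun φ g => φ (p.2⁻¹ * g * p.1)
      map_add' := fun φ ψ => rfl
      map_smul' := fun c φ => rfl }
  map_one' := by ext φ g; simp
  map_mul' p q := by
    ext φ g
    simp [Module.End.mul_apply, mul_assoc]


/-- The submodule of `V` generated by `π(n)v - v` for `n ∈ N`; the module of
`N`-coinvariants is the quotient `V_N = V / coinvSub ρ N`. -/
def coinvSub (ρ : Representation A G V) (N : Subgroup G) : Submodule A V :=
  Submodule.span A {x | ∃ n ∈ N, ∃ v : V, x = ρ n v - v}

open scoped Pointwise in
/-- **Statement 10.**  Let `G` be (the `F`-points of) a reductive `p`-adic group,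
`P = MN` a parabolic subgroup of `G` (so `N ⊴ P`, every element of `P` is a
product `mn`, and `P\G` is compact), and `(π,V)` a smooth `A[G]`-module that is
finitely generated over `A[G]`.  Then the `N`-coinvariants `V_N`, with its
natural `M`-action (induced via `Submodule.mapQ`), is finitely generated as an
`A[M]`-module. -/
theorem statement10
    [IsTopologicalGroup G] [LocallyCompactSpace G] [TotallyDisconnectedSpace G] [T2Space G]
    (ρ : Representation A G V)
    (P M N : Subgroup G)
    (hMP : M ≤ P) (hNP : N ≤ P)
    (hnorm : ∀ p ∈ P, ∀ n ∈ N, p * n * p⁻¹ ∈ N)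
    (hdecomp : ∀ p ∈ P, ∃ m ∈ M, ∃ n ∈ N, p = m * n)
    (hcpt : ∃ C : Set G, IsCompact C ∧ ∀ g : G, ∃ p ∈ P, ∃ c ∈ C, g = p * c)
    (hsmooth : IsSmoothRep ρ)
    (hfin : IsGFinite ρ)
    (hstab : ∀ m : G, m ∈ M → coinvSub ρ N ≤ (coinvSub ρ N).comap (ρ m)) :
    ∃ s : Finset (V ⧸ coinvSub ρ N),
      Submodule.span A {w : V ⧸ coinvSub ρ N | ∃ m : G, ∃ hm : m ∈ M, ∃ x ∈ s,
        w = Submodule.mapQ (coinvSub ρ N) (coinvSub ρ N) (ρ m) (hstab m hm) x} = ⊤ := by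
  classical
  obtain ⟨s₀, hs₀⟩ := hfin
  obtain ⟨C, hCcpt, hCcov⟩ := hcpt
  set Q := coinvSub ρ N with hQ
  -- key: for each v, the orbit of v under C hits only finitely many vectors
  have key : ∀ v : V, ∃ T : Finset G, ∀ c ∈ C, ∃ t ∈ T, ρ c v = ρ t v := by
    intro v
    obtain ⟨K, hKopen, hKfix⟩ := hsmooth v
    have hcover : C ⊆ ⋃ c : C, ((c : G) • (K : Set G)) := by
      intro x hx
      exact Set.mem_iUnion.2 ⟨⟨x, hx⟩, ⟨1, K.one_mem, by simp⟩⟩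
    obtain ⟨t, ht⟩ := hCcpt.elim_finite_subcover _
      (fun c : C => hKopen.smul (c : G)) hcover
    refine ⟨t.image (fun c : C => (c : G)), ?_⟩
    intro c hc
    obtain ⟨i, hi, hci⟩ := Set.mem_iUnion₂.1 (ht hc)
    have hk : (i : G)⁻¹ * c ∈ K := by
      have := Set.mem_smul_set_iff_inv_smul_mem.1 hci
      simpa [smul_eq_mul] using this
    refine ⟨(i : G), Finset.mem_image_of_mem (fun c : C => (c : G)) hi, ?_⟩
    have : c = (i : G) * ((i : G)⁻¹ * c) := by group
    rw [this, map_mul, Module.End.mul_apply, hKfix _ hk]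
  choose T hT using key
  refine ⟨s₀.biUnion (fun v => (T v).image (fun t => Q.mkQ (ρ t v))), ?_⟩
  rw [eq_top_iff]
  have hmap : Submodule.map Q.mkQ
      (Submodule.span A {w | ∃ g : G, ∃ v ∈ s₀, w = ρ g v}) = ⊤ := by
    rw [hs₀, Submodule.map_top, Submodule.range_mkQ]
  rw [Submodule.map_span] at hmap
  rw [← hmap]
  apply Submodule.span_le.2
  rintro y ⟨x, ⟨g, v, hv, rfl⟩, rfl⟩
  obtain ⟨p, hp, c, hc, rfl⟩ := hCcov g
  obtain ⟨m, hm, n, hn, rfl⟩ := hdecomp p hp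
  obtain ⟨t, htT, htv⟩ := hT v c hc
  have hmkN : ∀ w : V, Q.mkQ (ρ n w) = Q.mkQ w := by
    intro w
    rw [Submodule.mkQ_apply, Submodule.mkQ_apply, Submodule.Quotient.eq]
    exact Submodule.subset_span ⟨n, hn, w, rfl⟩
  have hcomp : ρ (m * n * c) v = ρ m (ρ n (ρ c v)) := by
    rw [map_mul, map_mul]; rfl
  have heq : Q.mkQ (ρ (m * n * c) v)
      = Submodule.mapQ Q Q (ρ m) (hstab m hm) (Q.mkQ (ρ t v)) := by
    rw [hcomp, Submodule.mkQ_apply, Submodule.mkQ_apply, Submodule.mapQ_apply]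
    have h1 : Submodule.Quotient.mk (p := Q) (ρ m (ρ n (ρ c v)))
        = Submodule.mapQ Q Q (ρ m) (hstab m hm)
          (Submodule.Quotient.mk (ρ n (ρ c v))) := by
      rw [Submodule.mapQ_apply]
    rw [h1]
    have := hmkN (ρ c v)
    rw [Submodule.mkQ_apply, Submodule.mkQ_apply] at this
    rw [this, htv, Submodule.mapQ_apply]
  apply Submodule.subset_span
  refine ⟨m, hm, Q.mkQ (ρ t v), ?_, heq⟩
  exact Finset.mem_biUnion.2 ⟨v, hv, Finset.mem_image.2 ⟨t, htT, rfl⟩⟩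

end Doubling
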